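/- Let B = closedBall(c, r) ⊆ ℝ^n with r > 0. Then every periodic billiard trajectory on B has length ≥ 4r. -/

import Mathlib

open scoped RealInnerProductSpace Pointwise
open Metric

noncomputable section

/-- Euclidean space ℝ^n. -/
abbrev Euc (n : ℕ) := EuclideanSpace ℝ (Fin n)

/-- The image of a closed polygon with vertices `q 0, …, q (m-1)` (indices mod `m`):
the union of the segments `[q i, q (i+1)]`. -/
def polyImage {n m : ℕ} [NeZero m] (q : Fin m → Euc n) : Set (Euc n) :=
  ⋃ i : Fin m, segment ℝ (q i) (q (i + 1))

/-- The length of a closed polygon: `∑ i, ‖q (i+1) - q i‖`. -/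
noncomputable def polyLength {n m : ℕ} [NeZero m] (q : Fin m → Euc n) : ℝ :=
  ∑ i : Fin m, ‖q (i + 1) - q i‖

/-- A convex body: a compact convex set with nonempty interior. -/
def IsConvexBody {n : ℕ} (K : Set (Euc n)) : Prop :=
  IsCompact K ∧ Convex ℝ K ∧ (interior K).Nonempty

/-- A closed polygon belongs to `𝒫⁺(K)` if no translate of its image is contained
in the interior of `K`. -/
def InPPlus {n m : ℕ} [NeZero m] (K : Set (Euc n)) (q : Fin m → Euc n) : Prop :=
  ∀ x : Euc n, ¬ ((fun p => p + x) '' polyImage q ⊆ interior K)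

/-- Unit direction of the `i`-th edge of a closed polygon. -/
noncomputable def dir {n m : ℕ} [NeZero m] (q : Fin m → Euc n) (i : Fin m) : Euc n :=
  ‖q (i + 1) - q i‖⁻¹ • (q (i + 1) - q i)

/-- Outer normal `ν i = u (i-1) - u i` at the `i`-th vertex. -/
noncomputable def normalVec {n m : ℕ} [NeZero m] (q : Fin m → Euc n) (i : Fin m) : Euc n :=
  dir q (i - 1) - dir q i

/-- A periodic billiard trajectory on a convex body `K`. -/
def IsBilliard {n m : ℕ} [NeZero m] (K : Set (Euc n)) (q : Fin m → Euc n) : Prop :=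
  2 ≤ m ∧ (∀ i, q (i + 1) ≠ q i) ∧ (∀ i, q i ∈ K) ∧
    ∀ i, normalVec q i ≠ 0 ∧ ∀ x ∈ K, ⟪x - q i, normalVec q i⟫ ≤ 0

lemma key_lemma {n m : ℕ} (hm : 1 ≤ m) (u : ℕ → Euc n) (l : ℕ → ℝ)
    (hunit : ∀ j, ‖u j‖ = 1)
    (hum : u m = u 0)
    (hne : ∀ j, u (j + 1) ≠ u j)
    (hl : ∀ j, 0 < l j)
    (hsum : ∑ j ∈ Finset.range m, l j • u j = 0) :
    4 ≤ ∑ j ∈ Finset.range m, ‖u (j + 1) - u j‖ := by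
  set d : ℕ → ℝ := fun j => ‖u (j + 1) - u j‖ with hd_def
  set C : ℕ → ℝ := fun i => ∑ j ∈ Finset.range i, d j with hC_def
  set S : ℝ := C m with hS_def
  have hd : ∀ j, 0 < d j := fun j => norm_pos_iff.mpr (sub_ne_zero.mpr (hne j))
  have tele : ∀ a b : ℕ, a ≤ b → u b - u a = ∑ j ∈ Finset.Ico a b, (u (j + 1) - u j) := by
    intro a b hab
    rw [Finset.sum_Ico_eq_sub _ hab, Finset.sum_range_sub, Finset.sum_range_sub]
    abel
  have hCsub : ∀ a b : ℕ, a ≤ b → ∑ j ∈ Finset.Ico a b, d j = C b - C a := by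
    intro a b hab
    rw [Finset.sum_Ico_eq_sub _ hab]
  have chord : ∀ a b : ℕ, a ≤ b → ‖u b - u a‖ ≤ C b - C a := by
    intro a b hab
    rw [tele a b hab, ← hCsub a b hab]
    exact norm_sum_le _ _
  have hCmono : ∀ a b : ℕ, a ≤ b → C a ≤ C b := by
    intro a b hab
    have := chord a b hab
    have h0 : (0:ℝ) ≤ ‖u b - u a‖ := norm_nonneg _
    linarith
  have hS0 : 0 < S := Finset.sum_pos (fun j _ => hd j) ⟨0, Finset.mem_range.mpr hm⟩
  -- find k
  set T : Finset ℕ := (Finset.range m).filter (fun j => C j ≤ S / 2) with hT_def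
  have hT0 : 0 ∈ T := by
    refine Finset.mem_filter.mpr ⟨Finset.mem_range.mpr hm, ?_⟩
    simp only [hC_def, Finset.range_zero, Finset.sum_empty]
    linarith
  set k : ℕ := T.max' ⟨0, hT0⟩ with hk_def
  have hkT : k ∈ T := T.max'_mem ⟨0, hT0⟩
  have hkm : k < m := Finset.mem_range.mp (Finset.mem_filter.mp hkT).1
  have hCk : C k ≤ S / 2 := (Finset.mem_filter.mp hkT).2
  have hCk1 : S / 2 ≤ C (k + 1) := by
    rcases lt_or_ge (k + 1) m with h | h
    · by_contra hcon
      push_neg at hcon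
      have : k + 1 ∈ T := Finset.mem_filter.mpr ⟨Finset.mem_range.mpr h, le_of_lt hcon⟩
      have := Finset.le_max' T (k + 1) this
      omega
    · have : k + 1 = m := by omega
      rw [this]
      linarith
  have hCksucc : C (k + 1) = C k + d k := Finset.sum_range_succ _ _
  set t : ℝ := (S / 2 - C k) / d k with ht_def
  have htdk : t * d k = S / 2 - C k := div_mul_cancel₀ _ (ne_of_gt (hd k))
  have ht0 : 0 ≤ t := div_nonneg (by linarith) (le_of_lt (hd k))
  have ht1 : t ≤ 1 := by
    rw [div_le_one (hd k)]
    linarith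
  set qq : Euc n := u k + t • (u (k + 1) - u k) with hqq_def
  have hqk : ‖u k - qq‖ = t * d k := by
    have : u k - qq = (-t) • (u (k + 1) - u k) := by
      rw [hqq_def]; module
    rw [this, norm_smul]
    simp [abs_of_nonneg ht0, hd_def]
  have hqk1 : ‖u (k + 1) - qq‖ = (1 - t) * d k := by
    have : u (k + 1) - qq = (1 - t) • (u (k + 1) - u k) := by
      rw [hqq_def]; module
    rw [this, norm_smul]
    simp [abs_of_nonneg (by linarith : (0:ℝ) ≤ 1 - t), hd_def]
  have hF : ∀ i ≤ m, ‖u i - u 0‖ + ‖u i - qq‖ ≤ S / 2 := by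
    intro i him
    rcases le_or_gt i k with hik | hik
    · have h1 : ‖u i - u 0‖ ≤ C i := by
        have := chord 0 i (Nat.zero_le i)
        simpa [hC_def] using this
      have h2 : ‖u i - qq‖ ≤ S / 2 - C i := by
        have htri : ‖u i - qq‖ ≤ ‖u k - u i‖ + ‖u k - qq‖ := by
          have : u i - qq = -(u k - u i) + (u k - qq) := by abel
          rw [this]
          exact (norm_add_le _ _).trans (by rw [norm_neg])
        have := chord i k hik
        linarith
      linarith
    · have hk1i : k + 1 ≤ i := hik
      have h1 : ‖u i - u 0‖ ≤ S - C i := by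
        have := chord i m him
        rw [hum, norm_sub_rev] at this
        linarith
      have h2 : ‖u i - qq‖ ≤ C i - S / 2 := by
        have htri : ‖u i - qq‖ ≤ ‖u i - u (k + 1)‖ + ‖u (k + 1) - qq‖ := by
          have : u i - qq = (u i - u (k + 1)) + (u (k + 1) - qq) := by abel
          rw [this]
          exact norm_add_le _ _
        have := chord (k + 1) i hk1i
        rw [hqk1] at htri
        have : ‖u i - qq‖ ≤ (C i - C (k + 1)) + (1 - t) * d k := by linarith
        rw [hCksucc] at this
        nlinarith [htdk]
      linarith
  -- find i with inner nonpositive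
  have hex : ∃ i ∈ Finset.range m, ⟪u 0 + qq, u i⟫ ≤ 0 := by
    by_contra hcon
    push_neg at hcon
    have h0 : (0:ℝ) = ∑ j ∈ Finset.range m, l j * ⟪u 0 + qq, u j⟫ := by
      have : ⟪u 0 + qq, ∑ j ∈ Finset.range m, l j • u j⟫ = (0:ℝ) := by
        rw [hsum, inner_zero_right]
      rw [inner_sum] at this
      simp_rw [real_inner_smul_right] at this
      linarith [this]
    have hpos : (0:ℝ) < ∑ j ∈ Finset.range m, l j * ⟪u 0 + qq, u j⟫ :=
      Finset.sum_pos (fun j hj => mul_pos (hl j) (hcon j hj)) ⟨0, Finset.mem_range.mpr hm⟩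
    linarith
  obtain ⟨i, hiR, hi⟩ := hex
  have him : i ≤ m := le_of_lt (Finset.mem_range.mp hiR)
  have h1 : 1 - ⟪u 0, u i⟫ ≤ ‖u i - u 0‖ := by
    have := real_inner_le_norm (u i - u 0) (u i)
    rw [inner_sub_left, real_inner_self_eq_norm_sq, hunit i] at this
    simp only [hunit i, mul_one, one_pow] at this
    linarith [real_inner_comm (u i) (u 0)]
  have h2 : 1 - ⟪qq, u i⟫ ≤ ‖u i - qq‖ := by
    have := real_inner_le_norm (u i - qq) (u i)
    rw [inner_sub_left, real_inner_self_eq_norm_sq, hunit i] at this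
    simp only [hunit i, mul_one, one_pow] at this
    linarith [real_inner_comm (u i) qq]
  have hadd : ⟪u 0 + qq, u i⟫ = ⟪u 0, u i⟫ + ⟪qq, u i⟫ := inner_add_left _ _ _
  have := hF i him
  have hS4 : 4 ≤ S := by linarith
  exact hS4

open Fin.NatCast

theorem stmt7 {n m : ℕ} [NeZero m] (c : Euc n) (r : ℝ) (hr : 0 < r)
    (q : Fin m → Euc n) (hq : IsBilliard (Metric.closedBall c r) q) :
    4 * r ≤ polyLength q := by
  obtain ⟨hm2, hqne, hqK, hnorm⟩ := hq
  have hm : 1 ≤ m := le_trans (by norm_num) hm2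
  have hLpos : ∀ i : Fin m, 0 < ‖q (i + 1) - q i‖ :=
    fun i => norm_pos_iff.mpr (sub_ne_zero.mpr (hqne i))
  have hdir_smul : ∀ i : Fin m, ‖q (i + 1) - q i‖ • dir q i = q (i + 1) - q i := by
    intro i
    rw [dir, smul_smul, mul_inv_cancel₀ (ne_of_gt (hLpos i)), one_smul]
  have hdir_unit : ∀ i : Fin m, ‖dir q i‖ = 1 := by
    intro i
    rw [dir, norm_smul, norm_inv, norm_norm, inv_mul_cancel₀ (ne_of_gt (hLpos i))]
  -- Step B : r * ‖ν i‖ ≤ ⟪q i - c, ν i⟫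
  have hB : ∀ i : Fin m, r * ‖normalVec q i‖ ≤ ⟪q i - c, normalVec q i⟫ := by
    intro i
    obtain ⟨hν, cK⟩ := hnorm i
    set ν := normalVec q i with hν_def
    have hνn : 0 < ‖ν‖ := norm_pos_iff.mpr hν
    have hx : c + (r * ‖ν‖⁻¹) • ν ∈ Metric.closedBall c r := by
      rw [Metric.mem_closedBall, dist_eq_norm]
      have h1 : c + (r * ‖ν‖⁻¹) • ν - c = (r * ‖ν‖⁻¹) • ν := by abel
      rw [h1, norm_smul, Real.norm_eq_abs, abs_of_nonneg (by positivity),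
        mul_assoc, inv_mul_cancel₀ (ne_of_gt hνn), mul_one]
    have hle := cK _ hx
    have hexp : ⟪c + (r * ‖ν‖⁻¹) • ν - q i, ν⟫ =
        ⟪c - q i, ν⟫ + (r * ‖ν‖⁻¹) * ⟪ν, ν⟫ := by
      have h2 : c + (r * ‖ν‖⁻¹) • ν - q i = (c - q i) + (r * ‖ν‖⁻¹) • ν := by abel
      rw [h2, inner_add_left, real_inner_smul_left]
    have hself : ⟪ν, ν⟫ = ‖ν‖ ^ 2 := real_inner_self_eq_norm_sq ν
    have hci : ⟪c - q i, ν⟫ = -⟪q i - c, ν⟫ := by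
      rw [← inner_neg_left]; congr 1; abel
    have hmul : (r * ‖ν‖⁻¹) * ‖ν‖ ^ 2 = r * ‖ν‖ := by
      field_simp
    rw [hexp, hself, hci, hmul] at hle
    linarith
  -- Step A : ∑ ⟪q i - c, ν i⟫ = polyLength q
  have hA : ∑ i : Fin m, ⟪q i - c, normalVec q i⟫ = polyLength q := by
    unfold polyLength
    simp_rw [normalVec, inner_sub_right]
    rw [Finset.sum_sub_distrib]
    have h1 : ∑ i : Fin m, ⟪q i - c, dir q (i - 1)⟫ =
        ∑ i : Fin m, ⟪q (i + 1) - c, dir q i⟫ := by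
      rw [← Equiv.sum_comp (Equiv.addRight (1 : Fin m)) (fun i => ⟪q i - c, dir q (i - 1)⟫)]
      apply Finset.sum_congr rfl
      intro i _
      simp [add_sub_cancel_right]
    rw [h1, ← Finset.sum_sub_distrib]
    apply Finset.sum_congr rfl
    intro i _
    rw [← inner_sub_left]
    have h2 : (q (i + 1) - c) - (q i - c) = q (i + 1) - q i := by abel
    rw [h2, dir, real_inner_smul_right, real_inner_self_eq_norm_sq]
    rw [pow_two, ← mul_assoc, inv_mul_cancel₀ (ne_of_gt (hLpos i)), one_mul]
  -- key lemma application
  have hcast : ∀ j : ℕ, ((j + 1 : ℕ) : Fin m) = (j : Fin m) + 1 := by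
    intro j; push_cast; ring
  have hkey : 4 ≤ ∑ j ∈ Finset.range m, ‖dir q (((j + 1 : ℕ) : Fin m)) - dir q ((j : Fin m))‖ := by
    apply key_lemma hm (fun j => dir q ((j : Fin m))) (fun j => ‖q ((j : Fin m) + 1) - q ((j : Fin m))‖)
    · intro j; exact hdir_unit _
    · simp [Fin.natCast_self]
    · intro j
      rw [hcast]
      have := (hnorm ((j : Fin m) + 1)).1
      rw [normalVec, add_sub_cancel_right] at this
      exact fun h => this (by rw [h, sub_self])
    · intro j; exact hLpos _
    · have h3 : ∑ j ∈ Finset.range m,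
          ‖q ((j : Fin m) + 1) - q ((j : Fin m))‖ • dir q ((j : Fin m)) =
          ∑ i : Fin m, ‖q (i + 1) - q i‖ • dir q i := by
        rw [← Fin.sum_univ_eq_sum_range (fun j : ℕ => ‖q ((j : Fin m) + 1) - q ((j : Fin m))‖ • dir q ((j : Fin m))) m]
        apply Finset.sum_congr rfl
        intro i _
        simp [Fin.cast_val_eq_self]
      rw [h3]
      simp_rw [hdir_smul]
      rw [Finset.sum_sub_distrib]
      rw [Fintype.sum_equiv (Equiv.addRight (1 : Fin m)) (fun i => q (i + 1)) q (fun i => rfl) |>.symm]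
      · simp
  -- rewrite key sum as ∑ over Fin
  have hS : ∑ j ∈ Finset.range m, ‖dir q (((j + 1 : ℕ) : Fin m)) - dir q ((j : Fin m))‖ =
      ∑ i : Fin m, ‖normalVec q i‖ := by
    have h4 : ∑ j ∈ Finset.range m, ‖dir q (((j + 1 : ℕ) : Fin m)) - dir q ((j : Fin m))‖ =
        ∑ i : Fin m, ‖dir q (i + 1) - dir q i‖ := by
      rw [← Fin.sum_univ_eq_sum_range (fun j : ℕ => ‖dir q (((j + 1 : ℕ) : Fin m)) - dir q ((j : Fin m))‖) m]
      apply Finset.sum_congr rfl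
      intro i _
      rw [hcast]
      simp [Fin.cast_val_eq_self]
    rw [h4]
    simp_rw [normalVec]
    apply Fintype.sum_equiv (Equiv.addRight (1 : Fin m))
    intro i
    simp only [Equiv.coe_addRight, add_sub_cancel_right]
    rw [norm_sub_rev]
  rw [hS] at hkey
  calc 4 * r = r * 4 := by ring
    _ ≤ r * ∑ i : Fin m, ‖normalVec q i‖ := by
        apply mul_le_mul_of_nonneg_left hkey (le_of_lt hr)
    _ = ∑ i : Fin m, r * ‖normalVec q i‖ := Finset.mul_sum _ _ _
    _ ≤ ∑ i : Fin m, ⟪q i - c, normalVec q i⟫ := Finset.sum_le_sum (fun i _ => hB i)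
    _ = polyLength q := hA
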